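/- Quantile band functions strictly dominate tail-outlying functions: Assume that for every t ∈ I the marginal CDF F_t is continuous on ℝ. Let 0 < α' < α < 1/2, let U ⊆ I be a nonempty open subinterval, and let f : I → ℝ be Borel measurable with f(t) ≤ q_{α'}(t) for all t ∈ U. Then every x ∈ C(I,ℝ) satisfying q_α(t) < x(t) < q_{1−α}(t) for all t ∈ I satisfies f ≺ x. Consequently, ED(f,P) ≤ P*{x ∈ C(I,ℝ) : x(t) ≤ q_α(t) or x(t) ≥ q_{1−α}(t) for some t ∈ I}. -/

import Mathlib

open MeasureTheory Set Filter
open scoped NNReal ENNReal symmDiff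

noncomputable section

/-- The space `C(I, ℝ)` of continuous real-valued functions on `I = [0,1]`,
equipped with the sup metric. -/
abbrev FSp := C(unitInterval, ℝ)

/-- Borel σ-algebra on `C(I, ℝ)`. -/
instance : MeasurableSpace FSp := borel FSp
instance : BorelSpace FSp := ⟨rfl⟩

/-- Pointwise depth `D_g(t) = 1 - |P{x : x(t) > g(t)} - P{x : x(t) < g(t)}|`. -/
def pdepth (P : Measure FSp) (g : unitInterval → ℝ) (t : unitInterval) : ℝ :=
  1 - |(P {x : FSp | g t < x t}).toReal - (P {x : FSp | x t < g t}).toReal|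

/-- Depth CDF (d-CDF) `Φ_g(r) = Leb{t ∈ I : D_g(t) ≤ r}`. -/
def dcdf (P : Measure FSp) (g : unitInterval → ℝ) (r : ℝ) : ℝ :=
  (volume {t : unitInterval | pdepth P g t ≤ r}).toReal

/-- The set `R(g,h) = {r ∈ [0,1] : Φ_g(r) ≠ Φ_h(r)}`. -/
def Rset (P : Measure FSp) (g h : unitInterval → ℝ) : Set ℝ :=
  {r ∈ Icc (0:ℝ) 1 | dcdf P g r ≠ dcdf P h r}

/-- `g ≺ h`: `g` is more extreme than `h`, i.e. `R(g,h)` is nonempty and, with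
`r* = inf R(g,h)`, there is `δ > 0` with `Φ_g(r) > Φ_h(r)` for all
`r ∈ (r*, r*+δ) ∩ [0,1]`.  `g ⪰ h` is `¬ prec P g h`. -/
def prec (P : Measure FSp) (g h : unitInterval → ℝ) : Prop :=
  (Rset P g h).Nonempty ∧
  ∃ δ > 0, ∀ r ∈ Ioo (sInf (Rset P g h)) (sInf (Rset P g h) + δ) ∩ Icc (0:ℝ) 1,
    dcdf P h r < dcdf P g r

/-- Extremal depth `ED(g,P) = P*{x ∈ C(I,ℝ) : g ⪰ x}` (a measure applied to an
arbitrary set is the induced outer measure). -/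
def ed (P : Measure FSp) (g : unitInterval → ℝ) : ℝ :=
  (P {x : FSp | ¬ prec P g ⇑x}).toReal

/-- Minimal depth level `d_f = inf{r ∈ [0,1] : Φ_f(r) > 0}`. -/
def dmin (P : Measure FSp) (f : unitInterval → ℝ) : ℝ :=
  sInf {r ∈ Icc (0:ℝ) 1 | 0 < dcdf P f r}

/-- Marginal CDF `F_t(y) = P{x : x(t) ≤ y}`. -/
def margF (P : Measure FSp) (t : unitInterval) (y : ℝ) : ℝ :=
  (P {x : FSp | x t ≤ y}).toReal

/-- Pointwise quantile function `q_a(t) = inf{y : F_t(y) ≥ a}`. -/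
def quant (P : Measure FSp) (a : ℝ) (t : unitInterval) : ℝ :=
  sInf {y : ℝ | a ≤ margF P t y}

/-- Lower envelope `f_L(t) = inf{f(t) : f ∈ C(I,ℝ), ED(f,P) > α}`. -/
def envL (P : Measure FSp) (α : ℝ) (t : unitInterval) : ℝ :=
  sInf ((fun f : FSp => f t) '' {f : FSp | α < ed P ⇑f})

/-- Upper envelope `f_U(t) = sup{f(t) : f ∈ C(I,ℝ), ED(f,P) > α}`. -/
def envU (P : Measure FSp) (α : ℝ) (t : unitInterval) : ℝ :=
  sSup ((fun f : FSp => f t) '' {f : FSp | α < ed P ⇑f})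

/-- The `(1-α)` extremal-depth central region `C_{1-α}`. -/
def centralRegion (P : Measure FSp) (α : ℝ) : Set FSp :=
  {x : FSp | ∀ t, envL P α t ≤ x t ∧ x t ≤ envU P α t}

/-- Boundary `∂C_{1-α}` of the central region. -/
def centralBoundary (P : Measure FSp) (α : ℝ) : Set FSp :=
  {x ∈ centralRegion P α | ∃ t, x t = envL P α t ∨ x t = envU P α t}

open scoped Topology

section Aux

variable (P : Measure FSp) [IsProbabilityMeasure P]

lemma measurable_eval (t : unitInterval) : Measurable fun x : FSp => x t :=
  (continuous_eval_const t).measurable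

lemma measSet_le (t : unitInterval) (c : ℝ) : MeasurableSet {x : FSp | x t ≤ c} :=
  measurableSet_le (measurable_eval t) measurable_const

lemma margF_mono (t : unitInterval) : Monotone (margF P t) := fun y z hyz =>
  ENNReal.toReal_mono (measure_ne_top P _)
    (measure_mono fun x hx => le_trans hx hyz)

lemma atom_eq_zero (t : unitInterval) (hc : Continuous (margF P t)) (c : ℝ) :
    P {x : FSp | x t = c} = 0 := by
  have key : ∀ n : ℕ, (P {x : FSp | x t = c}).toReal
      ≤ margF P t c - margF P t (c - ((n : ℝ) + 1)⁻¹) := by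
    intro n
    have hpos : (0 : ℝ) < ((n : ℝ) + 1)⁻¹ := by positivity
    have hsub : {x : FSp | x t ≤ c - ((n : ℝ) + 1)⁻¹} ⊆ {x : FSp | x t ≤ c} := by
      intro x hx
      simp only [Set.mem_setOf_eq] at hx ⊢
      linarith
    have hdiff : P ({x : FSp | x t ≤ c} \ {x : FSp | x t ≤ c - ((n : ℝ) + 1)⁻¹})
        = P {x : FSp | x t ≤ c} - P {x : FSp | x t ≤ c - ((n : ℝ) + 1)⁻¹} :=
      measure_diff hsub (measSet_le t _).nullMeasurableSet (measure_ne_top P _)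
    have hmem : {x : FSp | x t = c} ⊆
        {x : FSp | x t ≤ c} \ {x : FSp | x t ≤ c - ((n : ℝ) + 1)⁻¹} := by
      intro x hx
      simp only [Set.mem_setOf_eq, Set.mem_diff] at *
      exact ⟨hx.le, by rw [hx]; intro h; linarith⟩
    calc (P {x : FSp | x t = c}).toReal
        ≤ (P ({x : FSp | x t ≤ c} \ {x : FSp | x t ≤ c - ((n : ℝ) + 1)⁻¹})).toReal :=
          ENNReal.toReal_mono (measure_ne_top P _) (measure_mono hmem)
      _ = margF P t c - margF P t (c - ((n : ℝ) + 1)⁻¹) := by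
          rw [hdiff, ENNReal.toReal_sub_of_le (measure_mono hsub) (measure_ne_top P _)]
          rfl
  have htend : Tendsto (fun n : ℕ => margF P t c - margF P t (c - ((n : ℝ) + 1)⁻¹))
      atTop (𝓝 0) := by
    have h1 : Tendsto (fun n : ℕ => c - ((n : ℝ) + 1)⁻¹) atTop (𝓝 c) := by
      have := tendsto_one_div_add_atTop_nhds_zero_nat (𝕜 := ℝ)
      simp only [one_div] at this
      simpa using tendsto_const_nhds.sub this
    have h2 : Tendsto (fun n : ℕ => margF P t (c - ((n : ℝ) + 1)⁻¹)) atTop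
        (𝓝 (margF P t c)) := (hc.tendsto c).comp h1
    have h3 := h2.const_sub (margF P t c)
    simpa using h3
  have hle : (P {x : FSp | x t = c}).toReal ≤ 0 := ge_of_tendsto' htend key
  have h0 : (P {x : FSp | x t = c}).toReal = 0 := le_antisymm hle ENNReal.toReal_nonneg
  rcases (ENNReal.toReal_eq_zero_iff _).mp h0 with h | h
  · exact h
  · exact absurd h (measure_ne_top P _)

lemma measure_lt_toReal (t : unitInterval) (hc : Continuous (margF P t)) (c : ℝ) :
    (P {x : FSp | x t < c}).toReal = margF P t c := by
  have h0 := atom_eq_zero P t hc c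
  have heq : P {x : FSp | x t ≤ c} = P {x : FSp | x t < c} := by
    apply le_antisymm
    · calc P {x : FSp | x t ≤ c}
          ≤ P ({x : FSp | x t < c} ∪ {x : FSp | x t = c}) :=
            measure_mono fun x hx => by
              simp only [Set.mem_setOf_eq, Set.mem_union] at hx ⊢
              exact lt_or_eq_of_le hx
        _ ≤ P {x : FSp | x t < c} + P {x : FSp | x t = c} := measure_union_le _ _
        _ = P {x : FSp | x t < c} := by rw [h0, add_zero]
    · exact measure_mono fun x hx => by
        simp only [Set.mem_setOf_eq] at hx ⊢
        exact hx.le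
  rw [margF] at *
  rw [← heq]

lemma measure_gt_toReal (t : unitInterval) (c : ℝ) :
    (P {x : FSp | c < x t}).toReal = 1 - margF P t c := by
  have hcompl : {x : FSp | c < x t} = {x : FSp | x t ≤ c}ᶜ := by
    ext x; simp [not_le]
  rw [hcompl, measure_compl (measSet_le t c) (measure_ne_top P _), measure_univ,
    ENNReal.toReal_sub_of_le prob_le_one ENNReal.one_ne_top, ENNReal.toReal_one]
  rfl

lemma pdepth_eq (t : unitInterval) (hc : Continuous (margF P t)) (g : unitInterval → ℝ) :
    pdepth P g t = 1 - |1 - 2 * margF P t (g t)| := by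
  rw [pdepth, measure_gt_toReal P t, measure_lt_toReal P t hc]
  congr 1
  congr 1
  ring

lemma quantSet_nonempty (t : unitInterval) {a : ℝ} (ha : a < 1) :
    {y : ℝ | a ≤ margF P t y}.Nonempty := by
  by_contra h
  push_neg at h
  simp only [Set.not_nonempty_iff_eq_empty, Set.eq_empty_iff_forall_notMem,
    Set.mem_setOf_eq, not_le] at h
  have hU : (⋃ n : ℕ, {x : FSp | x t ≤ (n : ℝ)}) = Set.univ := by
    ext x
    simp only [Set.mem_iUnion, Set.mem_setOf_eq, Set.mem_univ, iff_true]
    exact exists_nat_ge (x t)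
  have hdir : Directed (· ⊆ ·) (fun n : ℕ => {x : FSp | x t ≤ (n : ℝ)}) := by
    intro m n
    rcases le_total m n with hmn | hmn
    · refine ⟨n, fun x hx => ?_, fun x hx => hx⟩
      simp only [Set.mem_setOf_eq] at hx ⊢
      exact le_trans hx (by exact_mod_cast hmn)
    · refine ⟨m, fun x hx => hx, fun x hx => ?_⟩
      simp only [Set.mem_setOf_eq] at hx ⊢
      exact le_trans hx (by exact_mod_cast hmn)
  have hsup := hdir.measure_iUnion (μ := P)
  rw [hU, measure_univ] at hsup
  have hlt : ∀ n : ℕ, P {x : FSp | x t ≤ (n : ℝ)} < ENNReal.ofReal a := fun n =>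
    (ENNReal.lt_ofReal_iff_toReal_lt (measure_ne_top P _)).mpr (h n)
  have : (1 : ℝ≥0∞) ≤ ENNReal.ofReal a := hsup ▸ iSup_le fun n => (hlt n).le
  exact absurd (lt_of_le_of_lt this (ENNReal.ofReal_lt_one.mpr ha)) (lt_irrefl _)

lemma quantSet_bddBelow (t : unitInterval) {a : ℝ} (ha : 0 < a) :
    BddBelow {y : ℝ | a ≤ margF P t y} := by
  have hI : (⋂ n : ℕ, {x : FSp | x t ≤ -(n : ℝ)}) = ∅ := by
    ext x
    simp only [Set.mem_iInter, Set.mem_setOf_eq, Set.mem_empty_iff_false, iff_false, not_forall]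
    obtain ⟨n, hn⟩ := exists_nat_gt (-(x t))
    exact ⟨n, by push_neg; linarith⟩
  have hanti : Antitone fun n : ℕ => {x : FSp | x t ≤ -(n : ℝ)} := by
    intro m n hmn x hx
    simp only [Set.mem_setOf_eq] at hx ⊢
    have hmn' : (m : ℝ) ≤ n := by exact_mod_cast hmn
    linarith
  have htend := tendsto_measure_iInter_atTop (μ := P)
    (fun n => (measSet_le t _).nullMeasurableSet) hanti ⟨0, measure_ne_top P _⟩
  rw [hI, measure_empty] at htend
  have hev : ∀ᶠ n : ℕ in atTop, (P ∘ fun n : ℕ => {x : FSp | x t ≤ -(n : ℝ)}) n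
      < ENNReal.ofReal a :=
    htend.eventually_lt_const (ENNReal.ofReal_pos.mpr ha)
  obtain ⟨n, hn⟩ := hev.exists
  refine ⟨-(n : ℝ), fun y hy => ?_⟩
  by_contra hyn
  push_neg at hyn
  have : margF P t y ≤ margF P t (-(n : ℝ)) := margF_mono P t hyn.le
  have hFn : margF P t (-(n : ℝ)) < a :=
    ENNReal.toReal_lt_of_lt_ofReal hn
  simp only [Set.mem_setOf_eq] at hy
  linarith

lemma margF_quant_ge (t : unitInterval) {a : ℝ} (h0 : 0 < a) (h1 : a < 1)
    (hc : Continuous (margF P t)) : a ≤ margF P t (quant P a t) := by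
  have hcl : IsClosed {y : ℝ | a ≤ margF P t y} := isClosed_le continuous_const hc
  exact hcl.csInf_mem (quantSet_nonempty P t h1) (quantSet_bddBelow P t h0)

lemma margF_lt_of_lt_quant (t : unitInterval) {a y : ℝ} (h0 : 0 < a)
    (hy : y < quant P a t) : margF P t y < a := by
  by_contra h
  push_neg at h
  exact absurd (csInf_le (quantSet_bddBelow P t h0) h) (not_le.mpr hy)

lemma margF_quant_le (t : unitInterval) {a : ℝ} (h0 : 0 < a)
    (hc : Continuous (margF P t)) : margF P t (quant P a t) ≤ a := by
  have htend : Tendsto (margF P t) (𝓝[<] (quant P a t)) (𝓝 (margF P t (quant P a t))) :=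
    (hc.tendsto _).mono_left nhdsWithin_le_nhds
  refine le_of_tendsto htend ?_
  filter_upwards [self_mem_nhdsWithin] with y hy
  exact (margF_lt_of_lt_quant P t h0 hy).le

lemma dcdf_nonneg (g : unitInterval → ℝ) (r : ℝ) : 0 ≤ dcdf P g r :=
  ENNReal.toReal_nonneg

lemma dcdf_mono (g : unitInterval → ℝ) : Monotone (dcdf P g) := fun r s hrs =>
  ENNReal.toReal_mono (measure_ne_top _ _)
    (measure_mono fun t ht => le_trans ht hrs)

end Aux

/-- **Quantile band functions strictly dominate tail-outlying functions.** -/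
theorem quantile_band_dominates (P : Measure FSp) [IsProbabilityMeasure P]
    (hFcont : ∀ t : unitInterval, Continuous (margF P t))
    (α' α : ℝ) (hα' : 0 < α') (hαα : α' < α) (hα : α < 1/2)
    (a b : unitInterval) (hab : a < b)
    (f : unitInterval → ℝ) (hfmeas : Measurable f)
    (hf : ∀ t ∈ Ioo a b, f t ≤ quant P α' t) :
    (∀ x : FSp, (∀ t, quant P α t < x t ∧ x t < quant P (1 - α) t) →
      prec P f ⇑x) ∧
    ed P f ≤ (P {x : FSp | ∃ t, x t ≤ quant P α t ∨ quant P (1 - α) t ≤ x t}).toReal := by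
  
  have hα0 : 0 < α := lt_trans hα' hαα
  have hα1 : α < 1 := by linarith
  have h1α0 : 0 < 1 - α := by linarith
  have hpf : ∀ t ∈ Ioo a b, pdepth P f t ≤ 2 * α' := by
    intro t ht
    have hq : margF P t (quant P α' t) ≤ α' := margF_quant_le P t hα' (hFcont t)
    have hft : margF P t (f t) ≤ α' := le_trans (margF_mono P t (hf t ht)) hq
    have hf0 : 0 ≤ margF P t (f t) := ENNReal.toReal_nonneg
    rw [pdepth_eq P t (hFcont t) f, abs_of_nonneg (by linarith)]
    linarith
  have hfpos : 0 < dcdf P f (2 * α') := by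
    have hsub : Ioo a b ⊆ {t : unitInterval | pdepth P f t ≤ 2 * α'} :=
      fun t ht => hpf t ht
    have hemb : MeasurableEmbedding (Subtype.val : unitInterval → ℝ) :=
      MeasurableEmbedding.subtype_coe measurableSet_Icc
    have himg : (Subtype.val : unitInterval → ℝ) '' Ioo a b = Ioo (a : ℝ) (b : ℝ) := by
      ext y
      constructor
      · rintro ⟨t, ⟨h1, h2⟩, rfl⟩
        exact ⟨Subtype.coe_lt_coe.mpr h1, Subtype.coe_lt_coe.mpr h2⟩
      · rintro ⟨h1, h2⟩
        have hy : y ∈ unitInterval := ⟨le_trans a.2.1 h1.le, le_trans h2.le b.2.2⟩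
        exact ⟨⟨y, hy⟩, ⟨Subtype.coe_lt_coe.mp h1, Subtype.coe_lt_coe.mp h2⟩, rfl⟩
    have hvol : volume (Ioo a b : Set unitInterval) = ENNReal.ofReal ((b : ℝ) - a) := by
      rw [unitInterval.volume_def, hemb.comap_apply, himg, Real.volume_Ioo]
    have hlt : (0 : ℝ≥0∞) < volume {t : unitInterval | pdepth P f t ≤ 2 * α'} := by
      refine lt_of_lt_of_le ?_ (measure_mono hsub)
      rw [hvol]
      exact ENNReal.ofReal_pos.mpr (sub_pos.mpr (Subtype.coe_lt_coe.mpr hab))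
    exact ENNReal.toReal_pos hlt.ne' (measure_ne_top _ _)
  have main : ∀ x : FSp, (∀ t, quant P α t < x t ∧ x t < quant P (1 - α) t) →
      prec P f ⇑x := by
    intro x hx
    have hpx : ∀ t, 2 * α ≤ pdepth P (⇑x) t := by
      intro t
      have hge : α ≤ margF P t (x t) :=
        le_trans (margF_quant_ge P t hα0 hα1 (hFcont t)) (margF_mono P t (hx t).1.le)
      have hltx : margF P t (x t) < 1 - α := margF_lt_of_lt_quant P t h1α0 (hx t).2
      rw [pdepth_eq P t (hFcont t) ⇑x]
      have habs : |1 - 2 * margF P t (x t)| ≤ 1 - 2 * α :=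
        abs_le.mpr ⟨by linarith, by linarith⟩
      linarith
    have hxz : ∀ r : ℝ, r < 2 * α → dcdf P (⇑x) r = 0 := by
      intro r hr
      have hempty : {t : unitInterval | pdepth P (⇑x) t ≤ r} = ∅ := by
        ext t
        simp only [Set.mem_setOf_eq, Set.mem_empty_iff_false, iff_false, not_le]
        exact lt_of_lt_of_le hr (hpx t)
      rw [dcdf, hempty, measure_empty, ENNReal.toReal_zero]
    have hmem : (2 * α') ∈ Rset P f ⇑x := by
      refine ⟨⟨by linarith, by linarith⟩, ?_⟩
      rw [hxz _ (by linarith)]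
      exact ne_of_gt hfpos
    have hne : (Rset P f ⇑x).Nonempty := ⟨_, hmem⟩
    have hbdd : BddBelow (Rset P f ⇑x) := ⟨0, fun r hr => hr.1.1⟩
    have hinfle : sInf (Rset P f ⇑x) ≤ 2 * α' := csInf_le hbdd hmem
    refine ⟨hne, 2 * α - sInf (Rset P f ⇑x), by linarith, ?_⟩
    rintro r ⟨⟨hr1, hr2⟩, _⟩
    have hr2' : r < 2 * α := by linarith
    rw [hxz r hr2']
    obtain ⟨r', hr'mem, hr'lt⟩ := exists_lt_of_csInf_lt hne hr1
    have hx0 : dcdf P (⇑x) r' = 0 := hxz r' (lt_trans hr'lt hr2')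
    have hfr' : 0 < dcdf P f r' :=
      lt_of_le_of_ne (dcdf_nonneg P f r') fun h => hr'mem.2 (h.symm.trans hx0.symm)
    exact lt_of_lt_of_le hfr' (dcdf_mono P f hr'lt.le)
  refine ⟨main, ?_⟩
  rw [ed]
  refine ENNReal.toReal_mono (measure_ne_top P _) (measure_mono ?_)
  intro x hx
  simp only [Set.mem_setOf_eq] at hx ⊢
  by_contra hcon
  push_neg at hcon
  exact hx (main x fun t => ⟨(hcon t).1, (hcon t).2⟩)
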